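/- (The pebble game with colors and slider-pinning.) Let H be the final configuration of any canonical (2,3)-pebble game construction. Replacing each pebble that lies on a vertex by a loop at that vertex, colored with the color of that pebble, yields a graph such that: every subgraph containing no loops is (2,3)-sparse; each of the two color classes of non-loop edges is a forest; and each maximal monochromatic tree contains exactly one loop of its color. In other words, the result is the graph of a minimally pinned axis-parallel bar-slider framework. -/

import Mathlib

open scoped Classical

namespace PebbleGame

/-- A configuration of the `(k,ℓ)`-pebble game with colors: a directed multigraph
whose edges are records `(tail, head, color)` (the color of an edge is the color of
the unique pebble lying on it), together with the multiset of colors of the pebbles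
sitting on each vertex. -/
structure PGConfig (V : Type) (k : ℕ) where
  edges : Multiset (V × V × Fin k)
  pebs : V → Multiset (Fin k)

variable {V : Type} [DecidableEq V] {k ℓ : ℕ}

/-- The configuration resulting from an add-edge move: a pebble of color `c` is picked
up from `v`, the directed edge `vw` is added and the pebble is placed on it. -/
def addEdgeCfg (H : PGConfig V k) (v w : V) (c : Fin k) : PGConfig V k :=
  ⟨(v, w, c) ::ₘ H.edges, Function.update H.pebs v ((H.pebs v).erase c)⟩

/-- The configuration resulting from a pebble-slide move along the edge `(v, w, c)`,
using a pebble of color `c'` on `w`: the edge `vw` is replaced by `wv`, the pebble of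
color `c` that was on the edge goes to `v`, and the pebble of color `c'` from `w` is
placed on the new edge `wv`. -/
def slideCfg (H : PGConfig V k) (v w : V) (c c' : Fin k) : PGConfig V k :=
  ⟨(w, v, c') ::ₘ H.edges.erase (v, w, c),
    Function.update (Function.update H.pebs w ((H.pebs w).erase c')) v
      (c ::ₘ Function.update H.pebs w ((H.pebs w).erase c') v)⟩

/-- A legal move of the `(k,ℓ)`-pebble game with colors. -/
inductive Step (k ℓ : ℕ) : PGConfig V k → PGConfig V k → Prop
  | add (H : PGConfig V k) (v w : V) (c : Fin k)
      (hpeb : ℓ + 1 ≤ ∑ u ∈ ({v, w} : Finset V), (H.pebs u).card)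
      (hc : c ∈ H.pebs v) :
      Step k ℓ H (addEdgeCfg H v w c)
  | slide (H : PGConfig V k) (v w : V) (c c' : Fin k)
      (he : (v, w, c) ∈ H.edges)
      (hc : c' ∈ H.pebs w) :
      Step k ℓ H (slideCfg H v w c c')

/-- The initial configuration: no edges, and one pebble of each of the `k` colors on
every vertex. -/
def initCfg (V : Type) [DecidableEq V] [Fintype V] (k : ℕ) : PGConfig V k :=
  ⟨0, fun _ => Finset.univ.val⟩

/-- A configuration is reachable if it arises from the initial configuration by a
finite sequence of legal moves. -/
def Reachable [Fintype V] (k ℓ : ℕ) (H : PGConfig V k) : Prop :=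
  Relation.ReflTransGen (Step k ℓ) (initCfg V k) H

/-- The underlying undirected multigraph (multiset of edges) of a configuration. -/
def undirected (H : PGConfig V k) : Multiset (Sym2 V) :=
  H.edges.map fun e => s(e.1, e.2.1)

/-- The (undirected) edges of a configuration carrying a pebble of color `c`. -/
def monoEdges (H : PGConfig V k) (c : Fin k) : Multiset (Sym2 V) :=
  (H.edges.filter fun e => e.2.2 = c).map fun e => s(e.1, e.2.1)

/-- The undirected edges of color `c` among a multiset `F` of directed colored
edges. -/
def monoOf (F : Multiset (V × V × Fin k)) (c : Fin k) : Multiset (Sym2 V) :=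
  (F.filter fun e => e.2.2 = c).map fun e => s(e.1, e.2.1)

/-- `G` (a multiset of undirected edges on the fixed finite vertex set `V`) is a
`(k,ℓ)`-pebble-game graph if it is the underlying undirected multigraph of some
reachable configuration. -/
def PebbleGameGraph [Fintype V] (k ℓ : ℕ) (E : Multiset (Sym2 V)) : Prop :=
  ∃ H : PGConfig V k, Reachable k ℓ H ∧ undirected H = E

/-- The edges of `E` spanned by the vertex set `S` (both endpoints in `S`). -/
def spanned (E : Multiset (Sym2 V)) (S : Finset V) : Multiset (Sym2 V) :=
  E.filter fun e => e ∈ S.sym2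

/-- A multigraph is `(k,ℓ)`-sparse if every nonempty set of `n'` vertices spans at
most `k n' - ℓ` edges. -/
def Sparse (k ℓ : ℕ) (E : Multiset (Sym2 V)) : Prop :=
  ∀ S : Finset V, S.Nonempty → (spanned E S).card ≤ k * S.card - ℓ

/-- A multigraph is `(k,ℓ)`-tight if it is `(k,ℓ)`-sparse with exactly `k|V| - ℓ`
edges. -/
def Tight [Fintype V] (k ℓ : ℕ) (E : Multiset (Sym2 V)) : Prop :=
  Sparse k ℓ E ∧ E.card = k * Fintype.card V - ℓ

/-- Connectivity (as undirected multigraphs) via the edges of `F`. -/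
def Conn (F : Multiset (Sym2 V)) : V → V → Prop :=
  Relation.ReflTransGen fun a b => s(a, b) ∈ F

/-- The connected components of the graph with vertex set `S` and edge multiset `F`
(whose edges are assumed to be spanned by `S`), as a finset of vertex sets. -/
noncomputable def components (S : Finset V) (F : Multiset (Sym2 V)) : Finset (Finset V) :=
  S.image fun v => S.filter fun u => Conn F v u

/-- The tree-pieces of the graph `(S, F)`: connected components that contain no cycle,
i.e. whose spanned edge count is exactly one less than their vertex count (an isolated
vertex is a tree-piece). -/
noncomputable def treePieces (S : Finset V) (F : Multiset (Sym2 V)) : Finset (Finset V) :=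
  (components S F).filter fun C => (spanned F C).card + 1 = C.card

/-- The number of tree-pieces of the graph `(S, F)`. -/
noncomputable def treePieceCount (S : Finset V) (F : Multiset (Sym2 V)) : ℕ :=
  (treePieces S F).card

/-- A multigraph contains a cycle iff some nonempty vertex set spans at least as many
edges as it has vertices. -/
def HasCycle (F : Multiset (Sym2 V)) : Prop :=
  ∃ S : Finset V, S.Nonempty ∧ S.card ≤ (spanned F S).card

/-- A spanning tree on the whole (finite) vertex set: connected with `|V| - 1` edges. -/
def IsSpanningTree [Fintype V] (T : Multiset (Sym2 V)) : Prop :=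
  (∀ u v : V, Conn T u v) ∧ T.card + 1 = Fintype.card V

/-- A spanning map-graph: the edges admit an orientation in which every vertex has
out-degree exactly one. -/
def IsSpanningMapGraph [Fintype V] (T : Multiset (Sym2 V)) : Prop :=
  ∃ M : Multiset (V × V), M.map (fun p => s(p.1, p.2)) = T ∧
    ∀ v : V, (M.filter fun p => p.1 = v).card = 1

/-- A `(k,ℓ)`-maps-and-trees decomposition: `ℓ` edge-disjoint spanning trees and
`k - ℓ` edge-disjoint spanning map-graphs whose union is `E`. -/
def MapsAndTrees [Fintype V] (k ℓ : ℕ) (E : Multiset (Sym2 V)) : Prop :=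
  ∃ (T : Fin ℓ → Multiset (Sym2 V)) (M : Fin (k - ℓ) → Multiset (Sym2 V)),
    ((∑ i, T i) + ∑ j, M j) = E ∧ (∀ i, IsSpanningTree (T i)) ∧
      ∀ j, IsSpanningMapGraph (M j)

/-- `(S, T)` is a (possibly single-vertex) tree: nonempty vertex set `S`, edges spanned
by `S`, connected on `S`, and `|T| + 1 = |S|`. -/
def IsTreeOn (S : Finset V) (T : Multiset (Sym2 V)) : Prop :=
  S.Nonempty ∧ (∀ e ∈ T, e ∈ S.sym2) ∧ (∀ u ∈ S, ∀ v ∈ S, Conn T u v) ∧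
    T.card + 1 = S.card

/-- An `ℓTk` decomposition of `E`: `ℓ` edge-disjoint (not necessarily spanning,
possibly single-vertex) trees `(S i, T i)` whose edges partition `E`, such that every
vertex belongs to exactly `k` of the trees. -/
def LTkDecomp (k ℓ : ℕ) (E : Multiset (Sym2 V)) (S : Fin ℓ → Finset V)
    (T : Fin ℓ → Multiset (Sym2 V)) : Prop :=
  (∑ i, T i) = E ∧ (∀ i, IsTreeOn (S i) (T i)) ∧
    ∀ v : V, (Finset.univ.filter fun i => v ∈ S i).card = k

/-- A proper `ℓTk`: an `ℓTk` decomposition such that every nonempty subgraph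
(vertex set `U`, together with a sub-multiset `F i` of each tree spanned by `U`)
contains at least `ℓ` tree-pieces, the tree-pieces being the connected components of
the intersections of the trees with the subgraph. -/
def ProperLTk (k ℓ : ℕ) (E : Multiset (Sym2 V)) : Prop :=
  ∃ (S : Fin ℓ → Finset V) (T : Fin ℓ → Multiset (Sym2 V)),
    LTkDecomp k ℓ E S T ∧
      ∀ U : Finset V, U.Nonempty →
        ∀ F : Fin ℓ → Multiset (Sym2 V),
          (∀ i, F i ≤ T i) → (∀ i, ∀ e ∈ F i, e ∈ U.sym2) →
            ℓ ≤ ∑ i, treePieceCount (U ∩ S i) (F i)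

/-- One pebble-slide move (as a relation between configurations). -/
def SlideRel (k : ℕ) (A B : PGConfig V k) : Prop :=
  ∃ (v w : V) (c c' : Fin k), (v, w, c) ∈ A.edges ∧ c' ∈ A.pebs w ∧
    B = slideCfg A v w c c'

/-- A canonical move of the `(k,ℓ)`-pebble game with colors: add-edge moves cover the
new edge with a color present on both endpoints if one exists, and otherwise with the
highest-numbered color present; pebble-slide moves never create a monochromatic
cycle. -/
inductive CanStep (k ℓ : ℕ) : PGConfig V k → PGConfig V k → Prop
  | add (H : PGConfig V k) (v w : V) (c : Fin k)
      (hpeb : ℓ + 1 ≤ ∑ u ∈ ({v, w} : Finset V), (H.pebs u).card)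
      (hc : c ∈ H.pebs v)
      (hcanon : c ∈ H.pebs w ∨
        ((∀ c' : Fin k, c' ∈ H.pebs v → c' ∉ H.pebs w) ∧
          ∀ c' : Fin k, (c' ∈ H.pebs v ∨ c' ∈ H.pebs w) → c' ≤ c)) :
      CanStep k ℓ H (addEdgeCfg H v w c)
  | slide (H : PGConfig V k) (v w : V) (c c' : Fin k)
      (he : (v, w, c) ∈ H.edges)
      (hc : c' ∈ H.pebs w)
      (hnocycle : ∀ i : Fin k,
        HasCycle (monoEdges (slideCfg H v w c c') i) → HasCycle (monoEdges H i)) :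
      CanStep k ℓ H (slideCfg H v w c c')

/-- The graph obtained from a configuration by replacing every pebble lying on a
vertex by a loop at that vertex. -/
def withLoops [Fintype V] (H : PGConfig V k) : Multiset (Sym2 V) :=
  undirected H + Finset.univ.val.bind fun v => Multiset.replicate (H.pebs v).card s(v, v)

end PebbleGame
open PebbleGame

set_option linter.unusedSectionVars false
set_option maxHeartbeats 1000000

section Helpers
variable {V : Type} [DecidableEq V]

lemma sum_update_mem {α β : Type*} [DecidableEq α] (S : Finset α) (f : α → β) (g : β → ℕ)
    (v : α) (m : β) (hv : v ∈ S) :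
    ∑ u ∈ S, g (Function.update f v m u) = g m + ∑ u ∈ S.erase v, g (f u) := by
  rw [← Finset.add_sum_erase S _ hv, Function.update_self]
  congr 1
  exact Finset.sum_congr rfl fun u hu => by
    rw [Function.update_of_ne (Finset.ne_of_mem_erase hu)]

lemma sum_update_not_mem {α β : Type*} [DecidableEq α] (S : Finset α) (f : α → β) (g : β → ℕ)
    (v : α) (m : β) (hv : v ∉ S) :
    ∑ u ∈ S, g (Function.update f v m u) = ∑ u ∈ S, g (f u) :=
  Finset.sum_congr rfl fun u hu => by
    rw [Function.update_of_ne (by rintro rfl; exact hv hu)]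

lemma card_fin2 (s : Multiset (Fin 2)) : Multiset.card s = s.count 0 + s.count 1 := by
  induction s using Multiset.induction with
  | empty => simp
  | cons a s ih =>
    have ha : a = 0 ∨ a = 1 := by fin_cases a <;> simp
    rcases ha with h | h <;> subst h <;>
      simp [Multiset.count_cons, ih] <;> omega

noncomputable def outdegC (H : PGConfig V 2) (u : V) (c : Fin 2) : ℕ :=
  Multiset.card (H.edges.filter fun e => e.1 = u ∧ e.2.2 = c)

noncomputable def pebSum (H : PGConfig V 2) (S : Finset V) (c : Fin 2) : ℕ :=
  ∑ u ∈ S, (H.pebs u).count c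

noncomputable def leavC (H : PGConfig V 2) (S : Finset V) (c : Fin 2) : ℕ :=
  Multiset.card (H.edges.filter fun e => e.1 ∈ S ∧ e.2.1 ∉ S ∧ e.2.2 = c)

noncomputable def leavAll (H : PGConfig V 2) (S : Finset V) : ℕ :=
  Multiset.card (H.edges.filter fun e => e.1 ∈ S ∧ e.2.1 ∉ S)

lemma spanned_mono_card (H : PGConfig V 2) (S : Finset V) (c : Fin 2) :
    Multiset.card (spanned (monoEdges H c) S)
      = Multiset.card (H.edges.filter fun e => (e.1 ∈ S ∧ e.2.1 ∈ S) ∧ e.2.2 = c) := by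
  unfold spanned monoEdges
  rw [Multiset.filter_map, Multiset.card_map, Multiset.filter_filter]
  congr 1
  apply Multiset.filter_congr
  intro e _
  simp [Function.comp, Finset.mk_mem_sym2_iff, and_comm]

lemma sum_outdeg (M : Multiset (V × V × Fin 2)) (S : Finset V) (c : Fin 2) :
    ∑ u ∈ S, Multiset.card (M.filter fun e => e.1 = u ∧ e.2.2 = c)
      = Multiset.card (M.filter fun e => e.1 ∈ S ∧ e.2.2 = c) := by
  induction S using Finset.induction with
  | empty =>
    simp only [Finset.sum_empty, Finset.notMem_empty, false_and]
    symm
    rw [Multiset.card_eq_zero, Multiset.filter_eq_nil]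
    exact fun a _ h => h
  | @insert a S ha ih =>
    rw [Finset.sum_insert ha, ih]
    rw [← Multiset.card_add, Multiset.filter_add_filter]
    have h0 : (M.filter fun e => (e.1 = a ∧ e.2.2 = c) ∧ (e.1 ∈ S ∧ e.2.2 = c)) = 0 := by
      rw [Multiset.filter_eq_nil]
      rintro e _ ⟨⟨h1, _⟩, h2, _⟩
      exact ha (h1 ▸ h2)
    rw [h0, add_zero]
    congr 1
    apply Multiset.filter_congr
    intro e _
    simp only [Finset.mem_insert]
    tauto

lemma color_identity (H : PGConfig V 2)
    (hI : ∀ u c, outdegC H u c + (H.pebs u).count c = 1)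
    (S : Finset V) (c : Fin 2) :
    Multiset.card (spanned (monoEdges H c) S) + pebSum H S c + leavC H S c = S.card := by
  have h1 : ∑ u ∈ S, (outdegC H u c + (H.pebs u).count c) = S.card := by
    rw [Finset.sum_congr rfl fun u _ => hI u c]; simp
  rw [Finset.sum_add_distrib] at h1
  have h2 : ∑ u ∈ S, outdegC H u c
      = Multiset.card (H.edges.filter fun e => e.1 ∈ S ∧ e.2.2 = c) :=
    by unfold outdegC; exact sum_outdeg H.edges S c
  have h3 : Multiset.card (H.edges.filter fun e => e.1 ∈ S ∧ e.2.2 = c)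
      = Multiset.card (H.edges.filter fun e => (e.1 ∈ S ∧ e.2.1 ∈ S) ∧ e.2.2 = c)
        + leavC H S c := by
    unfold leavC
    rw [← Multiset.card_add, Multiset.filter_add_filter]
    have h0 : (H.edges.filter fun e =>
        ((e.1 ∈ S ∧ e.2.1 ∈ S) ∧ e.2.2 = c) ∧ (e.1 ∈ S ∧ e.2.1 ∉ S ∧ e.2.2 = c)) = 0 := by
      rw [Multiset.filter_eq_nil]; rintro e _ ⟨⟨⟨_, h1⟩, _⟩, _, h2, _⟩; exact h2 h1
    rw [h0, add_zero]
    congr 1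
    apply Multiset.filter_congr
    intro e _
    by_cases hh : e.2.1 ∈ S <;> tauto
  rw [spanned_mono_card]
  unfold pebSum
  omega

lemma nocycle_iff (H : PGConfig V 2)
    (hI : ∀ u c, outdegC H u c + (H.pebs u).count c = 1) (c : Fin 2) :
    ¬ HasCycle (monoEdges H c) ↔
      ∀ S : Finset V, S.Nonempty → 1 ≤ pebSum H S c + leavC H S c := by
  constructor
  · intro h S hS
    have hid := color_identity H hI S c
    have hcard := hS.card_pos
    by_contra hcon
    exact h ⟨S, hS, by omega⟩
  · rintro h ⟨S, hS, hle⟩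
    have hid := color_identity H hI S c
    have := h S hS
    omega

structure PGInv (H : PGConfig V 2) : Prop where
  noloop : ∀ e ∈ H.edges, e.1 ≠ e.2.1
  iden : ∀ u c, outdegC H u c + (H.pebs u).count c = 1
  nocycle : ∀ c, ¬ HasCycle (monoEdges H c)
  sparse : ∀ S : Finset V, 2 ≤ S.card →
    3 ≤ (∑ u ∈ S, Multiset.card (H.pebs u)) + leavAll H S

lemma PGInv.count_le {H : PGConfig V 2} (hI : PGInv H) (u : V) (c : Fin 2) :
    (H.pebs u).count c ≤ 1 := by
  have := hI.iden u c; omega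

lemma PGInv.card_le {H : PGConfig V 2} (hI : PGInv H) (u : V) :
    Multiset.card (H.pebs u) ≤ 2 := by
  rw [card_fin2]
  have h0 := hI.count_le u 0; have h1 := hI.count_le u 1; omega

lemma count_one_of_card_two {H : PGConfig V 2} (hI : PGInv H) (u : V)
    (h2 : Multiset.card (H.pebs u) = 2) (c : Fin 2) : (H.pebs u).count c = 1 := by
  rw [card_fin2] at h2
  have h0 := hI.count_le u 0; have h1 := hI.count_le u 1
  have hc : c = 0 ∨ c = 1 := by fin_cases c <;> simp
  rcases hc with rfl | rfl <;> omega

lemma inv_add {H : PGConfig V 2} {v w : V} {c : Fin 2}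
    (hpeb : 3 + 1 ≤ ∑ u ∈ ({v, w} : Finset V), Multiset.card (H.pebs u))
    (hc : c ∈ H.pebs v) (hI : PGInv H) : PGInv (addEdgeCfg H v w c) := by
  have hvw : v ≠ w := by
    rintro rfl
    have hvv : ({v, v} : Finset V) = {v} := by simp
    rw [hvv, Finset.sum_singleton] at hpeb
    have := hI.card_le v
    omega
  have hsum : Multiset.card (H.pebs v) + Multiset.card (H.pebs w)
      = ∑ u ∈ ({v, w} : Finset V), Multiset.card (H.pebs u) := by
    rw [Finset.sum_pair hvw]
  have hv2 : Multiset.card (H.pebs v) = 2 := by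
    have := hI.card_le v; have := hI.card_le w; omega
  have hw2 : Multiset.card (H.pebs w) = 2 := by
    have := hI.card_le v; have := hI.card_le w; omega
  have hcv : (H.pebs v).count c = 1 := count_one_of_card_two hI v hv2 c
  have hcw : (H.pebs w).count c = 1 := count_one_of_card_two hI w hw2 c
  have hAe : (addEdgeCfg H v w c).edges = (v, w, c) ::ₘ H.edges := rfl
  have hApv : (addEdgeCfg H v w c).pebs v = (H.pebs v).erase c := by
    show Function.update H.pebs v ((H.pebs v).erase c) v = _
    rw [Function.update_self]
  have hApu : ∀ u : V, u ≠ v → (addEdgeCfg H v w c).pebs u = H.pebs u := by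
    intro u hu
    show Function.update H.pebs v ((H.pebs v).erase c) u = _
    rw [Function.update_of_ne hu]
  -- identity
  have hiden : ∀ u c'', outdegC (addEdgeCfg H v w c) u c''
      + ((addEdgeCfg H v w c).pebs u).count c'' = 1 := by
    intro u c''
    have hI' := hI.iden u c''
    unfold outdegC at hI' ⊢
    rw [hAe]
    by_cases huv : u = v
    · subst huv
      rw [hApv]
      by_cases hcc : c'' = c
      · subst hcc
        rw [Multiset.filter_cons_of_pos _ ⟨rfl, rfl⟩, Multiset.card_cons,
            Multiset.count_erase_self]
        omega
      · rw [Multiset.filter_cons_of_neg _ (by rintro ⟨-, h⟩; exact hcc h.symm),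
            Multiset.count_erase_of_ne hcc]
        exact hI'
    · rw [hApu u huv,
          Multiset.filter_cons_of_neg _ (by rintro ⟨h, -⟩; exact huv h.symm)]
      exact hI'
  refine ⟨?_, hiden, ?_, ?_⟩
  · -- noloop
    intro e he
    rw [hAe, Multiset.mem_cons] at he
    rcases he with rfl | he
    · exact hvw
    · exact hI.noloop e he
  · -- nocycle
    intro i
    rw [nocycle_iff _ hiden i]
    intro S hS
    by_cases hic : i = c
    · subst hic
      by_cases hwS : w ∈ S
      · have h1 : ((addEdgeCfg H v w i).pebs w).count i = 1 := by
          rw [hApu w (Ne.symm hvw)]; exact hcw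
        have h2 : ((addEdgeCfg H v w i).pebs w).count i ≤ pebSum (addEdgeCfg H v w i) S i := by
          unfold pebSum
          exact Finset.single_le_sum (f := fun u => ((addEdgeCfg H v w i).pebs u).count i)
            (fun u _ => Nat.zero_le _) hwS
        omega
      · by_cases hvS : v ∈ S
        · have h1 : leavC (addEdgeCfg H v w i) S i
              = Multiset.card ((v, w, i)
                ::ₘ (H.edges.filter fun e => e.1 ∈ S ∧ e.2.1 ∉ S ∧ e.2.2 = i)) := by
            unfold leavC
            rw [hAe, Multiset.filter_cons_of_pos _ ⟨hvS, hwS, rfl⟩]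
          rw [Multiset.card_cons] at h1
          omega
        · have h1 : pebSum (addEdgeCfg H v w i) S i = pebSum H S i := by
            refine Finset.sum_congr rfl fun u hu => ?_
            rw [hApu u (by rintro rfl; exact hvS hu)]
          have h2 : leavC (addEdgeCfg H v w i) S i = leavC H S i := by
            unfold leavC
            rw [hAe, Multiset.filter_cons_of_neg _ (by rintro ⟨h, -⟩; exact hvS h)]
          have h3 := (nocycle_iff H hI.iden i).mp (hI.nocycle i) S hS
          omega
    · have h1 : pebSum (addEdgeCfg H v w c) S i = pebSum H S i := by
        refine Finset.sum_congr rfl fun u hu => ?_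
        by_cases huv : u = v
        · subst huv
          rw [hApv, Multiset.count_erase_of_ne hic]
        · rw [hApu u huv]
      have h2 : leavC (addEdgeCfg H v w c) S i = leavC H S i := by
        unfold leavC
        rw [hAe, Multiset.filter_cons_of_neg _ (by rintro ⟨-, -, h⟩; exact hic h.symm)]
      have h3 := (nocycle_iff H hI.iden i).mp (hI.nocycle i) S hS
      omega
  · -- sparse
    intro S hS2
    have hcard1 : 0 < Multiset.card (H.pebs v) := by omega
    by_cases hvS : v ∈ S
    · have e1 : ∑ u ∈ S, Multiset.card ((addEdgeCfg H v w c).pebs u)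
          = Multiset.card ((H.pebs v).erase c)
            + ∑ u ∈ S.erase v, Multiset.card (H.pebs u) :=
        sum_update_mem S H.pebs Multiset.card v _ hvS
      have e2 : Multiset.card (H.pebs v) + ∑ u ∈ S.erase v, Multiset.card (H.pebs u)
          = ∑ u ∈ S, Multiset.card (H.pebs u) :=
        Finset.add_sum_erase S (fun u => Multiset.card (H.pebs u)) hvS
      have e3 : Multiset.card ((H.pebs v).erase c) = Multiset.card (H.pebs v) - 1 := by
        rw [Multiset.card_erase_of_mem hc]; rfl
      by_cases hwS : w ∈ S
      · have e4 : leavAll (addEdgeCfg H v w c) S = leavAll H S := by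
          unfold leavAll
          rw [hAe, Multiset.filter_cons_of_neg _ (by rintro ⟨-, h⟩; exact h hwS)]
        have h4 : ∑ u ∈ ({v, w} : Finset V), Multiset.card (H.pebs u)
            ≤ ∑ u ∈ S, Multiset.card (H.pebs u) :=
          Finset.sum_le_sum_of_subset (by
            intro x hx
            rcases Finset.mem_insert.1 hx with rfl | hx
            · exact hvS
            · rw [Finset.mem_singleton] at hx; exact hx ▸ hwS)
        omega
      · have e4 : leavAll (addEdgeCfg H v w c) S = leavAll H S + 1 := by
          unfold leavAll
          rw [hAe, Multiset.filter_cons_of_pos _ ⟨hvS, hwS⟩, Multiset.card_cons]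
        have h5 := hI.sparse S hS2
        omega
    · have e1 : ∑ u ∈ S, Multiset.card ((addEdgeCfg H v w c).pebs u)
          = ∑ u ∈ S, Multiset.card (H.pebs u) :=
        sum_update_not_mem S H.pebs Multiset.card v _ hvS
      have e4 : leavAll (addEdgeCfg H v w c) S = leavAll H S := by
        unfold leavAll
        rw [hAe, Multiset.filter_cons_of_neg _ (by rintro ⟨h, -⟩; exact hvS h)]
      have h5 := hI.sparse S hS2
      omega

lemma inv_slide {H : PGConfig V 2} {v w : V} {c c' : Fin 2}
    (he : (v, w, c) ∈ H.edges) (hc : c' ∈ H.pebs w)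
    (hnocycle : ∀ i, HasCycle (monoEdges (slideCfg H v w c c') i) → HasCycle (monoEdges H i))
    (hI : PGInv H) : PGInv (slideCfg H v w c c') := by
  have hvw : v ≠ w := hI.noloop _ he
  set N := H.edges.erase (v, w, c) with hN
  have hEN : H.edges = (v, w, c) ::ₘ N := (Multiset.cons_erase he).symm
  set P2 := Function.update H.pebs w ((H.pebs w).erase c') with hP2
  have hBe : (slideCfg H v w c c').edges = (w, v, c') ::ₘ N := rfl
  have hP2v : P2 v = H.pebs v := Function.update_of_ne hvw _ _
  have hP2w : P2 w = (H.pebs w).erase c' := Function.update_self _ _ _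
  have hP2u : ∀ u, u ≠ w → P2 u = H.pebs u := fun u hu => Function.update_of_ne hu _ _
  have hBv : (slideCfg H v w c c').pebs v = c ::ₘ H.pebs v := by
    show Function.update P2 v (c ::ₘ P2 v) v = _
    rw [Function.update_self, hP2v]
  have hBw : (slideCfg H v w c c').pebs w = (H.pebs w).erase c' := by
    show Function.update P2 v (c ::ₘ P2 v) w = _
    rw [Function.update_of_ne (Ne.symm hvw), hP2w]
  have hBu : ∀ u, u ≠ v → u ≠ w → (slideCfg H v w c c').pebs u = H.pebs u := by
    intro u h1 h2
    show Function.update P2 v (c ::ₘ P2 v) u = _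
    rw [Function.update_of_ne h1, hP2u u h2]
  have hwcnt : 1 ≤ (H.pebs w).count c' := Multiset.one_le_count_iff_mem.2 hc
  have hodB : ∀ u i, outdegC (slideCfg H v w c c') u i
      = Multiset.card (N.filter fun e => e.1 = u ∧ e.2.2 = i)
        + (if u = w ∧ i = c' then 1 else 0) := by
    intro u i
    unfold outdegC
    rw [hBe]
    by_cases h : u = w ∧ i = c'
    · obtain ⟨rfl, rfl⟩ := h
      rw [Multiset.filter_cons_of_pos _ ⟨rfl, rfl⟩, Multiset.card_cons, if_pos ⟨rfl, rfl⟩]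
    · rw [Multiset.filter_cons_of_neg _
        (by rintro ⟨h1, h2⟩; exact h ⟨h1.symm, h2.symm⟩), if_neg h, Nat.add_zero]
  have hodH : ∀ u i, outdegC H u i
      = Multiset.card (N.filter fun e => e.1 = u ∧ e.2.2 = i)
        + (if u = v ∧ i = c then 1 else 0) := by
    intro u i
    unfold outdegC
    rw [hEN]
    by_cases h : u = v ∧ i = c
    · obtain ⟨rfl, rfl⟩ := h
      rw [Multiset.filter_cons_of_pos _ ⟨rfl, rfl⟩, Multiset.card_cons, if_pos ⟨rfl, rfl⟩]
    · rw [Multiset.filter_cons_of_neg _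
        (by rintro ⟨h1, h2⟩; exact h ⟨h1.symm, h2.symm⟩), if_neg h, Nat.add_zero]
  have hiden : ∀ u i, outdegC (slideCfg H v w c c') u i
      + ((slideCfg H v w c c').pebs u).count i = 1 := by
    intro u i
    have hH := hI.iden u i
    rw [hodH u i] at hH
    rw [hodB u i]
    by_cases huv : u = v
    · subst huv
      rw [hBv, Multiset.count_cons, if_neg (fun h => hvw h.1)]
      by_cases hic : i = c
      · subst hic
        rw [if_pos ⟨rfl, rfl⟩] at hH
        rw [if_pos rfl]
        omega
      · rw [if_neg (fun h => hic h.2)] at hH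
        rw [if_neg hic]
        omega
    · by_cases huw : u = w
      · subst huw
        rw [if_neg (fun h => huv h.1)] at hH
        rw [hBw]
        by_cases hic' : i = c'
        · subst hic'
          rw [Multiset.count_erase_self, if_pos ⟨rfl, rfl⟩]
          omega
        · rw [Multiset.count_erase_of_ne hic', if_neg (fun h => hic' h.2)]
          omega
      · rw [hBu u huv huw, if_neg (fun h => huw h.1)]
        rw [if_neg (fun h => huv h.1)] at hH
        omega
  refine ⟨?_, hiden, ?_, ?_⟩
  · intro e heB
    rw [hBe, Multiset.mem_cons] at heB
    rcases heB with rfl | heB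
    · exact Ne.symm hvw
    · exact hI.noloop e (Multiset.mem_of_mem_erase heB)
  · intro i hcyc
    exact hI.nocycle i (hnocycle i hcyc)
  · intro S hS2
    have base := hI.sparse S hS2
    have hlB : leavAll (slideCfg H v w c c') S
        = Multiset.card (N.filter fun e => e.1 ∈ S ∧ e.2.1 ∉ S)
          + (if w ∈ S ∧ v ∉ S then 1 else 0) := by
      unfold leavAll
      rw [hBe]
      by_cases h : w ∈ S ∧ v ∉ S
      · rw [Multiset.filter_cons_of_pos (a := (w, v, c')) N h, Multiset.card_cons, if_pos h]
      · rw [Multiset.filter_cons_of_neg (a := (w, v, c')) N h, if_neg h, Nat.add_zero]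
    have hlH : leavAll H S
        = Multiset.card (N.filter fun e => e.1 ∈ S ∧ e.2.1 ∉ S)
          + (if v ∈ S ∧ w ∉ S then 1 else 0) := by
      unfold leavAll
      rw [hEN]
      by_cases h : v ∈ S ∧ w ∉ S
      · rw [Multiset.filter_cons_of_pos (a := (v, w, c)) N h, Multiset.card_cons, if_pos h]
      · rw [Multiset.filter_cons_of_neg (a := (v, w, c)) N h, if_neg h, Nat.add_zero]
    have hwcard : 1 ≤ Multiset.card (H.pebs w) := by
      rw [card_fin2]
      have hc0 : c' = 0 ∨ c' = 1 := by fin_cases c' <;> simp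
      rcases hc0 with rfl | rfl <;> omega
    by_cases hvS : v ∈ S
    · have e1 : ∑ u ∈ S, Multiset.card ((slideCfg H v w c c').pebs u)
          = Multiset.card (c ::ₘ P2 v) + ∑ u ∈ S.erase v, Multiset.card (P2 u) :=
        sum_update_mem S P2 Multiset.card v _ hvS
      rw [Multiset.card_cons, hP2v] at e1
      have e2 : Multiset.card (H.pebs v) + ∑ u ∈ S.erase v, Multiset.card (H.pebs u)
          = ∑ u ∈ S, Multiset.card (H.pebs u) :=
        Finset.add_sum_erase S (fun u => Multiset.card (H.pebs u)) hvS
      by_cases hwS : w ∈ S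
      · have hwS' : w ∈ S.erase v := Finset.mem_erase.2 ⟨Ne.symm hvw, hwS⟩
        have e3 : ∑ u ∈ S.erase v, Multiset.card (P2 u)
            = Multiset.card ((H.pebs w).erase c')
              + ∑ u ∈ (S.erase v).erase w, Multiset.card (H.pebs u) :=
          sum_update_mem (S.erase v) H.pebs Multiset.card w _ hwS'
        have e4 : Multiset.card (H.pebs w)
              + ∑ u ∈ (S.erase v).erase w, Multiset.card (H.pebs u)
            = ∑ u ∈ S.erase v, Multiset.card (H.pebs u) :=
          Finset.add_sum_erase (S.erase v) (fun u => Multiset.card (H.pebs u)) hwS'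
        have e5 : Multiset.card ((H.pebs w).erase c')
            = Multiset.card (H.pebs w) - 1 := by
          rw [Multiset.card_erase_of_mem hc]; rfl
        rw [hlB, if_neg (fun h : w ∈ S ∧ v ∉ S => h.2 hvS)]
        rw [hlH, if_neg (fun h : v ∈ S ∧ w ∉ S => h.2 hwS)] at base
        omega
      · have e3 : ∑ u ∈ S.erase v, Multiset.card (P2 u)
            = ∑ u ∈ S.erase v, Multiset.card (H.pebs u) :=
          sum_update_not_mem (S.erase v) H.pebs Multiset.card w _
            (fun h => hwS (Finset.mem_of_mem_erase h))
        rw [hlB, if_neg (fun h : w ∈ S ∧ v ∉ S => hwS h.1)]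
        rw [hlH, if_pos ⟨hvS, hwS⟩] at base
        omega
    · have e1 : ∑ u ∈ S, Multiset.card ((slideCfg H v w c c').pebs u)
          = ∑ u ∈ S, Multiset.card (P2 u) :=
        sum_update_not_mem S P2 Multiset.card v _ hvS
      by_cases hwS : w ∈ S
      · have e3 : ∑ u ∈ S, Multiset.card (P2 u)
            = Multiset.card ((H.pebs w).erase c')
              + ∑ u ∈ S.erase w, Multiset.card (H.pebs u) :=
          sum_update_mem S H.pebs Multiset.card w _ hwS
        have e4 : Multiset.card (H.pebs w) + ∑ u ∈ S.erase w, Multiset.card (H.pebs u)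
            = ∑ u ∈ S, Multiset.card (H.pebs u) :=
          Finset.add_sum_erase S (fun u => Multiset.card (H.pebs u)) hwS
        have e5 : Multiset.card ((H.pebs w).erase c')
            = Multiset.card (H.pebs w) - 1 := by
          rw [Multiset.card_erase_of_mem hc]; rfl
        rw [hlB, if_pos ⟨hwS, hvS⟩]
        rw [hlH, if_neg (fun h : v ∈ S ∧ w ∉ S => hvS h.1)] at base
        omega
      · have e3 : ∑ u ∈ S, Multiset.card (P2 u)
            = ∑ u ∈ S, Multiset.card (H.pebs u) :=
          sum_update_not_mem S H.pebs Multiset.card w _ hwS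
        rw [hlB, if_neg (fun h : w ∈ S ∧ v ∉ S => hwS h.1)]
        rw [hlH, if_neg (fun h : v ∈ S ∧ w ∉ S => hvS h.1)] at base
        omega

lemma inv_init (V : Type) [DecidableEq V] [Fintype V] : PGInv (initCfg V 2) := by
  have hcnt : ∀ c : Fin 2, (Finset.univ.val : Multiset (Fin 2)).count c = 1 := by
    intro c
    exact Multiset.count_eq_one_of_mem Finset.univ.nodup (Finset.mem_univ c)
  refine ⟨?_, ?_, ?_, ?_⟩
  · intro e he; exact absurd he (Multiset.notMem_zero e)
  · intro u c
    unfold outdegC initCfg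
    simp [hcnt c]
  · intro c
    rintro ⟨S, hS, hle⟩
    have : spanned (monoEdges (initCfg V 2) c) S = 0 := rfl
    rw [this] at hle
    simp only [Multiset.card_zero, Nat.le_zero] at hle
    have := hS.card_pos
    omega
  · intro S hS2
    have h1 : ∀ u : V, Multiset.card ((initCfg V 2).pebs u) = 2 := by
      intro u
      show Multiset.card Finset.univ.val = 2
      rw [← Finset.card_def, Finset.card_univ, Fintype.card_fin]
    have h2 : ∑ u ∈ S, Multiset.card ((initCfg V 2).pebs u) = 2 * S.card := by
      rw [Finset.sum_congr rfl fun u _ => h1 u]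
      simp [mul_comm]
    omega

lemma inv_reach {V : Type} [DecidableEq V] [Fintype V] {H : PGConfig V 2}
    (h : Relation.ReflTransGen (CanStep 2 3) (initCfg V 2) H) : PGInv H := by
  induction h with
  | refl => exact inv_init V
  | tail hsteps hstep ih =>
    cases hstep with
    | add v w c hpeb hc hcanon => exact inv_add hpeb hc ih
    | slide v w c c' he hc hnocycle => exact inv_slide he hc hnocycle ih

lemma conn_symm {F : Multiset (Sym2 V)} {a b : V} (h : Conn F a b) : Conn F b a :=
  (@Relation.ReflTransGen.stdSymm _ _
    ⟨fun x y (hxy : s(x, y) ∈ F) => by rwa [Sym2.eq_swap] at hxy⟩).symm _ _ h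

lemma conn_mono {F F' : Multiset (Sym2 V)} (hle : F' ≤ F) {a b : V}
    (h : Conn F' a b) : Conn F a b :=
  Relation.ReflTransGen.mono (fun x y hxy => Multiset.mem_of_le hle hxy) _ _ h

lemma conn_card_le_aux (n : ℕ) : ∀ (F : Multiset (Sym2 V)), Multiset.card F ≤ n →
    ∀ (S : Finset V), S.Nonempty →
    (∀ u ∈ S, ∀ x ∈ S, Conn F u x) →
    (∀ a ∈ S, ∀ b : V, s(a, b) ∈ F → b ∈ S) →
    S.card ≤ Multiset.card (spanned F S) + 1 := by
  induction n with
  | zero =>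
    intro F hF S hne hconn _
    obtain ⟨x, hx⟩ := hne
    have hF0 : F = 0 := by
      rwa [Nat.le_zero, Multiset.card_eq_zero] at hF
    subst hF0
    have hsub : S ⊆ {x} := by
      intro y hy
      have h := hconn x hx y hy
      rcases Relation.ReflTransGen.cases_head h with rfl | ⟨z, hz, -⟩
      · exact Finset.mem_singleton_self x
      · exact absurd hz (Multiset.notMem_zero _)
    have := Finset.card_le_card hsub
    simp only [Finset.card_singleton] at this
    omega
  | succ n ih =>
    intro F hF S hne hconn hclosed
    by_cases hS1 : S.card ≤ 1
    · omega
    · push_neg at hS1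
      obtain ⟨u, huS, x, hxS, hux⟩ := Finset.one_lt_card.1 hS1
      rcases Relation.ReflTransGen.cases_head (hconn u huS x hxS) with heq | ⟨b, hb, -⟩
      · exact absurd heq hux
      · -- hb : s(u, b) ∈ F
        have hbS : b ∈ S := hclosed u huS b hb
        set F' := F.erase s(u, b) with hF'
        have hFF' : F = s(u, b) ::ₘ F' := (Multiset.cons_erase hb).symm
        have hcard' : Multiset.card F' ≤ n := by
          have h1 : Multiset.card F = Multiset.card F' + 1 := by
            rw [hFF', Multiset.card_cons]
          omega
        have hle' : F' ≤ F := Multiset.erase_le _ _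
        have hclosed' : ∀ a ∈ S, ∀ y : V, s(a, y) ∈ F' → y ∈ S := fun a ha y hy =>
          hclosed a ha y (Multiset.mem_of_le hle' hy)
        have hspanle : Multiset.card (spanned F' S) + 1 ≤ Multiset.card (spanned F S) := by
          unfold spanned
          rw [hFF', Multiset.filter_cons_of_pos _
            (by rw [Finset.mk_mem_sym2_iff]; exact ⟨huS, hbS⟩), Multiset.card_cons]
        have hclaim : ∀ y, Conn F u y → Conn F' u y ∨ Conn F' b y := by
          intro y hy
          induction hy with
          | refl => exact Or.inl Relation.ReflTransGen.refl
          | tail h1 h2 ihh =>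
            rename_i p q
            by_cases hpq : s(p, q) = s(u, b)
            · rcases Sym2.eq_iff.1 hpq with ⟨rfl, rfl⟩ | ⟨rfl, rfl⟩
              · exact Or.inr Relation.ReflTransGen.refl
              · exact Or.inl Relation.ReflTransGen.refl
            · have h2' : s(p, q) ∈ F' := (Multiset.mem_erase_of_ne hpq).2 h2
              rcases ihh with h | h
              · exact Or.inl (h.tail h2')
              · exact Or.inr (h.tail h2')
        by_cases hub : Conn F' u b
        · -- everything still connected to u in F'
          have hconn' : ∀ p ∈ S, ∀ q ∈ S, Conn F' p q := by
            have hall : ∀ y ∈ S, Conn F' u y := by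
              intro y hy
              rcases hclaim y (hconn u huS y hy) with h | h
              · exact h
              · exact hub.trans h
            intro p hp q hq
            exact (conn_symm (hall p hp)).trans (hall q hq)
          have := ih F' hcard' S hne hconn' hclosed'
          have hmono : Multiset.card (spanned F' S) ≤ Multiset.card (spanned F S) :=
            Multiset.card_le_card (Multiset.filter_le_filter _ hle')
          omega
        · -- S splits into the components of u and b
          set Su := S.filter (fun y => Conn F' u y) with hSu
          set Sb := S.filter (fun y => Conn F' b y) with hSb
          have hSeq : S = Su ∪ Sb := by
            apply Finset.Subset.antisymm
            · intro y hy
              rcases hclaim y (hconn u huS y hy) with h | h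
              · exact Finset.mem_union_left _ (Finset.mem_filter.2 ⟨hy, h⟩)
              · exact Finset.mem_union_right _ (Finset.mem_filter.2 ⟨hy, h⟩)
            · intro y hy
              rcases Finset.mem_union.1 hy with h | h
              · exact Finset.mem_of_mem_filter _ h
              · exact Finset.mem_of_mem_filter _ h
          have hdisj : Disjoint Su Sb := by
            rw [Finset.disjoint_left]
            intro y hyu hyb
            exact hub ((Finset.mem_filter.1 hyu).2.trans
              (conn_symm (Finset.mem_filter.1 hyb).2))
          have huSu : u ∈ Su := Finset.mem_filter.2 ⟨huS, Relation.ReflTransGen.refl⟩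
          have hbSb : b ∈ Sb := Finset.mem_filter.2 ⟨hbS, Relation.ReflTransGen.refl⟩
          have hconnu : ∀ p ∈ Su, ∀ q ∈ Su, Conn F' p q := by
            intro p hp q hq
            exact (conn_symm (Finset.mem_filter.1 hp).2).trans (Finset.mem_filter.1 hq).2
          have hconnb : ∀ p ∈ Sb, ∀ q ∈ Sb, Conn F' p q := by
            intro p hp q hq
            exact (conn_symm (Finset.mem_filter.1 hp).2).trans (Finset.mem_filter.1 hq).2
          have hclosedu : ∀ a ∈ Su, ∀ y : V, s(a, y) ∈ F' → y ∈ Su := by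
            intro a ha y hy
            refine Finset.mem_filter.2 ⟨hclosed' a (Finset.mem_of_mem_filter _ ha) y hy, ?_⟩
            exact (Finset.mem_filter.1 ha).2.tail hy
          have hclosedb : ∀ a ∈ Sb, ∀ y : V, s(a, y) ∈ F' → y ∈ Sb := by
            intro a ha y hy
            refine Finset.mem_filter.2 ⟨hclosed' a (Finset.mem_of_mem_filter _ ha) y hy, ?_⟩
            exact (Finset.mem_filter.1 ha).2.tail hy
          have ihu := ih F' hcard' Su ⟨u, huSu⟩ hconnu hclosedu
          have ihb := ih F' hcard' Sb ⟨b, hbSb⟩ hconnb hclosedb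
          have hcardS : S.card = Su.card + Sb.card := by
            rw [hSeq, Finset.card_union_of_disjoint hdisj]
          have hspl : Multiset.card (spanned F' Su) + Multiset.card (spanned F' Sb)
              ≤ Multiset.card (spanned F' S) := by
            unfold spanned
            rw [← Multiset.card_add, Multiset.filter_add_filter]
            have h0 : (F'.filter fun e => e ∈ Su.sym2 ∧ e ∈ Sb.sym2) = 0 := by
              rw [Multiset.filter_eq_nil]
              rintro e _ ⟨h1, h2⟩
              induction e with
              | _ a b =>
                rw [Finset.mk_mem_sym2_iff] at h1 h2
                exact (Finset.disjoint_left.1 hdisj h1.1) h2.1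
            rw [h0, add_zero]
            apply Multiset.card_le_card
            apply Multiset.monotone_filter_right
            rintro e (h | h)
            · exact Finset.sym2_mono (hSeq ▸ Finset.subset_union_left) h
            · exact Finset.sym2_mono (hSeq ▸ Finset.subset_union_right) h
          omega

lemma fin2_cases (a : Fin 2) : a = 0 ∨ a = 1 := by fin_cases a <;> simp

lemma undirected_split (H : PGConfig V 2) :
    undirected H = monoEdges H 0 + monoEdges H 1 := by
  unfold undirected monoEdges
  rw [← Multiset.map_add]
  congr 1
  rw [Multiset.filter_add_filter]
  have h0 : (H.edges.filter fun e => e.2.2 = 0 ∧ e.2.2 = 1) = 0 := by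
    rw [Multiset.filter_eq_nil]
    rintro e _ ⟨h1, h2⟩
    rw [h1] at h2
    exact absurd h2 (by decide)
  have h1 : (H.edges.filter fun e => e.2.2 = 0 ∨ e.2.2 = 1) = H.edges :=
    Multiset.filter_eq_self.2 fun e _ => fin2_cases e.2.2
  rw [h0, h1, add_zero]

lemma sparse_undirected {H : PGConfig V 2} (hI : PGInv H) (S : Finset V) (hS2 : 2 ≤ S.card) :
    Multiset.card (spanned (undirected H) S) + 3 ≤ 2 * S.card := by
  have h0 := color_identity H hI.iden S 0
  have h1 := color_identity H hI.iden S 1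
  have hsp : Multiset.card (spanned (undirected H) S)
      = Multiset.card (spanned (monoEdges H 0) S)
        + Multiset.card (spanned (monoEdges H 1) S) := by
    rw [undirected_split H]
    unfold spanned
    rw [Multiset.filter_add, Multiset.card_add]
  have hpb : ∑ u ∈ S, Multiset.card (H.pebs u) = pebSum H S 0 + pebSum H S 1 := by
    unfold pebSum
    rw [← Finset.sum_add_distrib]
    exact Finset.sum_congr rfl fun u _ => card_fin2 (H.pebs u)
  have hlv : leavC H S 0 + leavC H S 1 = leavAll H S := by
    unfold leavC leavAll
    rw [← Multiset.card_add, Multiset.filter_add_filter]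
    have hz : (H.edges.filter fun e =>
        (e.1 ∈ S ∧ e.2.1 ∉ S ∧ e.2.2 = 0) ∧ (e.1 ∈ S ∧ e.2.1 ∉ S ∧ e.2.2 = 1)) = 0 := by
      rw [Multiset.filter_eq_nil]
      rintro e _ ⟨⟨-, -, h1⟩, -, -, h2⟩
      rw [h1] at h2
      exact absurd h2 (by decide)
    rw [hz, add_zero]
    congr 1
    apply Multiset.filter_congr
    intro e _
    have := fin2_cases e.2.2
    tauto
  have hsparse := hI.sparse S hS2
  omega



/-- the pebble game with colors and slider-pinning: in the final
configuration of any canonical `(2,3)`-pebble-game construction, replacing each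
pebble on a vertex by a loop of the same color at that vertex yields a graph in
which every subgraph containing no loops is `(2,3)`-sparse, each color class of
non-loop edges is a forest (has no cycle), and each maximal monochromatic tree
(connected component of a color class) contains exactly one loop of its color. -/
theorem canonical_pebbles_to_loops_slider {V : Type} [Fintype V] [DecidableEq V]
    (H : PGConfig V 2)
    (hH : Relation.ReflTransGen (CanStep 2 3) (initCfg V 2) H) :
    (∀ F : Multiset (Sym2 V), F ≤ withLoops H → (∀ e ∈ F, ¬e.IsDiag) →
        Sparse 2 3 F) ∧
      (∀ c : Fin 2, ¬HasCycle (monoEdges H c)) ∧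
      ∀ c : Fin 2, ∀ C ∈ components Finset.univ (monoEdges H c),
        ∑ u ∈ C, (H.pebs u).count c = 1 := by
  have hI := inv_reach hH
  refine ⟨?_, hI.nocycle, ?_⟩
  · intro F hF hnd
    have hFle : F ≤ undirected H := by
      have h1 : F = F.filter (fun e => ¬ e.IsDiag) := (Multiset.filter_eq_self.2 hnd).symm
      have h2 : F.filter (fun e => ¬ e.IsDiag) ≤ (withLoops H).filter (fun e => ¬ e.IsDiag) :=
        Multiset.filter_le_filter _ hF
      have h3 : (withLoops H).filter (fun e => ¬ e.IsDiag)
          = (undirected H).filter (fun e => ¬ e.IsDiag) := by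
        unfold withLoops
        rw [Multiset.filter_add]
        have hz : ((Finset.univ.val.bind fun v =>
            Multiset.replicate (Multiset.card (H.pebs v)) s(v, v)).filter
              fun e => ¬ e.IsDiag) = 0 := by
          rw [Multiset.filter_eq_nil]
          intro e he hnde
          rw [Multiset.mem_bind] at he
          obtain ⟨v, -, hv⟩ := he
          rw [Multiset.eq_of_mem_replicate hv] at hnde
          exact hnde (Sym2.mk_isDiag_iff.2 rfl)
        rw [hz, add_zero]
      calc F = F.filter (fun e => ¬ e.IsDiag) := h1
        _ ≤ (withLoops H).filter (fun e => ¬ e.IsDiag) := h2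
        _ = (undirected H).filter (fun e => ¬ e.IsDiag) := h3
        _ ≤ undirected H := Multiset.filter_le _ _
    intro S hS
    have hcpos := hS.card_pos
    by_cases hS2 : 2 ≤ S.card
    · have hb := sparse_undirected hI S hS2
      have hle : Multiset.card (spanned F S) ≤ Multiset.card (spanned (undirected H) S) :=
        Multiset.card_le_card (Multiset.filter_le_filter _ hFle)
      omega
    · have hc1 : S.card = 1 := by omega
      obtain ⟨x, rfl⟩ := Finset.card_eq_one.1 hc1
      have hz : spanned F {x} = 0 := by
        unfold spanned
        rw [Multiset.filter_eq_nil]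
        intro e he hmem
        induction e with
        | _ a b =>
          rw [Finset.mk_mem_sym2_iff, Finset.mem_singleton, Finset.mem_singleton] at hmem
          exact hnd _ he (Sym2.mk_isDiag_iff.2 (hmem.1.trans hmem.2.symm))
      rw [hz]
      simp
  · intro c C hC
    rw [components, Finset.mem_image] at hC
    obtain ⟨v, -, rfl⟩ := hC
    set C := Finset.univ.filter fun u => Conn (monoEdges H c) v u with hCdef
    have hvC : v ∈ C := Finset.mem_filter.2 ⟨Finset.mem_univ v, Relation.ReflTransGen.refl⟩
    have hclosed : ∀ a ∈ C, ∀ b : V, s(a, b) ∈ monoEdges H c → b ∈ C := by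
      intro a ha b hb
      exact Finset.mem_filter.2 ⟨Finset.mem_univ b, (Finset.mem_filter.1 ha).2.tail hb⟩
    have hconn : ∀ p ∈ C, ∀ q ∈ C, Conn (monoEdges H c) p q := by
      intro p hp q hq
      exact (conn_symm (Finset.mem_filter.1 hp).2).trans (Finset.mem_filter.1 hq).2
    have hleav : leavC H C c = 0 := by
      unfold leavC
      rw [Multiset.card_eq_zero, Multiset.filter_eq_nil]
      rintro e he ⟨h1, h2, h3⟩
      apply h2
      have hmem : s(e.1, e.2.1) ∈ monoEdges H c := by
        unfold monoEdges
        exact Multiset.mem_map_of_mem _ (Multiset.mem_filter.2 ⟨he, h3⟩)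
      exact hclosed e.1 h1 e.2.1 hmem
    have hid := color_identity H hI.iden C c
    have hup := conn_card_le_aux (Multiset.card (monoEdges H c)) (monoEdges H c)
      le_rfl C ⟨v, hvC⟩ hconn hclosed
    have hlow : ¬ (C.card ≤ Multiset.card (spanned (monoEdges H c) C)) :=
      fun h => hI.nocycle c ⟨C, ⟨v, hvC⟩, h⟩
    show pebSum H C c = 1
    omega
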